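/- Let A ⊆ B ⊆ {1,…,N} with |A| ≥ γ·N, let γ ∈ (1/2, 1], ℓ ∈ (0, 2·arccos((1−γ)/γ)), and κ > D(Ω_B)/(γ·sin ℓ − 2(1−γ)·sin(ℓ/2)), and let θ be a Kuramoto solution with D(Θ_A(0)) ≤ ℓ. Then the ensemble Θ_B is partially phase-locked: sup_{t ≥ 0} D(Θ_B(t)) < ∞. -/

import Mathlib

/-- A Kuramoto solution on `[0,∞)` (modeled as a function on ℝ whose ODE holds on `Set.Ici 0`). -/
def IsKuramotoOn {N : ℕ} (κ : ℝ) (ν : Fin N → ℝ) (θ : ℝ → Fin N → ℝ) : Prop :=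
  ∀ (i : Fin N), ∀ t ∈ Set.Ici (0 : ℝ), HasDerivWithinAt (fun s => θ s i)
    (ν i + κ / N * ∑ j, Real.sin (θ t j - θ t i)) (Set.Ici 0) t

/-- Diameter of a sub-ensemble: `max_{i,j ∈ A} |x i - x j|`. -/
noncomputable def diam {N : ℕ} (A : Finset (Fin N)) (x : Fin N → ℝ) : ℝ :=
  sSup {d : ℝ | ∃ i ∈ A, ∃ j ∈ A, d = |x i - x j|}

open Real Set Filter Topology

section AuxDiam

lemma diam_bddAbove {N : ℕ} (S : Finset (Fin N)) (x : Fin N → ℝ) :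
    BddAbove {d : ℝ | ∃ i ∈ S, ∃ j ∈ S, d = |x i - x j|} := by
  apply Set.Finite.bddAbove
  apply Set.Finite.subset (Set.finite_range (fun p : Fin N × Fin N => |x p.1 - x p.2|))
  rintro d ⟨i, hi, j, hj, rfl⟩
  exact ⟨(i, j), rfl⟩

lemma abs_sub_le_diam {N : ℕ} {S : Finset (Fin N)} (x : Fin N → ℝ) {i j : Fin N}
    (hi : i ∈ S) (hj : j ∈ S) : |x i - x j| ≤ diam S x :=
  le_csSup (diam_bddAbove S x) ⟨i, hi, j, hj, rfl⟩

lemma diam_nonneg {N : ℕ} (S : Finset (Fin N)) (x : Fin N → ℝ) : 0 ≤ diam S x :=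
  Real.sSup_nonneg (by rintro d ⟨i, hi, j, hj, rfl⟩; exact abs_nonneg _)

lemma diam_le {N : ℕ} {S : Finset (Fin N)} {x : Fin N → ℝ} {m : ℝ} (hm : 0 ≤ m)
    (h : ∀ i ∈ S, ∀ j ∈ S, |x i - x j| ≤ m) : diam S x ≤ m :=
  Real.sSup_le (by rintro d ⟨i, hi, j, hj, rfl⟩; exact h i hi j hj) hm

lemma diam_neg {N : ℕ} (S : Finset (Fin N)) (x : Fin N → ℝ) :
    diam S (fun j => -x j) = diam S x := by
  unfold diam
  congr 1
  ext d
  constructor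
  · rintro ⟨i, hi, j, hj, rfl⟩
    exact ⟨j, hj, i, hi, by rw [show -x i - -x j = x j - x i from by ring]⟩
  · rintro ⟨i, hi, j, hj, rfl⟩
    exact ⟨j, hj, i, hi, by rw [show -x j - -x i = x i - x j from by ring]⟩

end AuxDiam

section AuxBarrier

/-- Right liminf-slope bound for a finite supremum of differentiable functions:
if every index active at `x` has derivative `< r`, the slope of the `sup'` is
frequently `< r` just to the right of `x`. -/
lemma frequently_slope_sup'_lt {ι : Type*} {P : Finset ι} (hP : P.Nonempty)
    {g : ι → ℝ → ℝ} {d : ι → ℝ} {x : ℝ} {s : Set ℝ} (hs : Ioi x ⊆ s)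
    (hg : ∀ p ∈ P, HasDerivWithinAt (g p) (d p) s x)
    {r : ℝ} (hr : ∀ p ∈ P, g p x = P.sup' hP (fun q => g q x) → d p < r) :
    ∃ᶠ z in 𝓝[>] x, slope (fun t => P.sup' hP (fun q => g q t)) x z < r := by
  set f : ℝ → ℝ := fun t => P.sup' hP (fun q => g q t) with hfdef
  by_contra hcon
  rw [not_frequently] at hcon
  have hev : ∀ᶠ z in 𝓝[>] x, ∃ p ∈ P, r * (z - x) + f x ≤ g p z := by
    filter_upwards [hcon, self_mem_nhdsWithin] with z hz hzx
    have hzx' : (0:ℝ) < z - x := sub_pos.2 hzx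
    have h1 : r ≤ slope f x z := not_lt.1 hz
    rw [slope_def_field, le_div_iff₀ (by linarith)] at h1
    obtain ⟨p, hp, hpz⟩ := P.exists_mem_eq_sup' hP (fun q => g q z)
    refine ⟨p, hp, ?_⟩
    have : f z = g p z := hpz
    nlinarith
  have hex : ∃ p ∈ P, ∃ᶠ z in 𝓝[>] x, r * (z - x) + f x ≤ g p z := by
    by_contra h
    push_neg at h
    have h' : ∀ᶠ z in 𝓝[>] x, ∀ p ∈ P, ¬(r * (z - x) + f x ≤ g p z) :=
      (eventually_all_finset P).2 fun p hp => (h p hp).mono fun _ hz => not_le.2 hz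
    obtain ⟨z, ⟨p, hp, hq⟩, hall⟩ := (hev.and h').exists
    exact hall p hp hq
  obtain ⟨p, hp, hfreq⟩ := hex
  have hcont : Tendsto (g p) (𝓝[>] x) (𝓝 (g p x)) :=
    ((hg p hp).continuousWithinAt).mono_left (nhdsWithin_mono x hs)
  have hlin : Tendsto (fun z => r * (z - x) + f x) (𝓝[>] x) (𝓝 (f x)) := by
    have h2 : Tendsto (fun z : ℝ => r * (z - x) + f x) (𝓝 x) (𝓝 (r * (x - x) + f x)) :=
      ((tendsto_id.sub_const x).const_mul r).add_const (f x)
    simpa using h2.mono_left nhdsWithin_le_nhds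
  have hgpx : g p x = f x := by
    refine le_antisymm (Finset.le_sup' (fun q => g q x) hp) ?_
    by_contra hlt
    push_neg at hlt
    have hev3 : ∀ᶠ z in 𝓝[>] x, g p z < r * (z - x) + f x := hcont.eventually_lt hlin hlt
    obtain ⟨z, h1, h2⟩ := (hfreq.and_eventually hev3).exists
    linarith
  have hslope : ∃ᶠ z in 𝓝[>] x, r ≤ slope (g p) x z := by
    refine (hfreq.and_eventually self_mem_nhdsWithin).mono ?_
    rintro z ⟨hq, hzx⟩
    have hzx' : (0:ℝ) < z - x := sub_pos.2 hzx
    rw [slope_def_field, le_div_iff₀ (by linarith)]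
    nlinarith [hgpx]
  have htend : Tendsto (slope (g p) x) (𝓝[>] x) (𝓝 (d p)) := by
    have h3 := hasDerivWithinAt_iff_tendsto_slope.1 (hg p hp)
    refine h3.mono_left (nhdsWithin_mono x ?_)
    intro z hz
    exact ⟨hs hz, (mem_Ioi.1 hz).ne'⟩
  have hdp : d p < r := hr p hp hgpx
  have hev2 : ∀ᶠ z in 𝓝[>] x, slope (g p) x z < r := htend.eventually_lt_const hdp
  obtain ⟨z, h1, h2⟩ := (hslope.and_eventually hev2).exists
  exact absurd h1 (not_le.2 h2)

lemma continuousOn_finset_sup' {ι : Type*} {s : Set ℝ} :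
    ∀ (P : Finset ι) (hP : P.Nonempty) (g : ι → ℝ → ℝ),
      (∀ p ∈ P, ContinuousOn (g p) s) →
      ContinuousOn (fun t => P.sup' hP (fun q => g q t)) s := by
  intro P
  induction P using Finset.cons_induction with
  | empty => intro h; exact absurd h (by simp)
  | cons a Q ha ih =>
    intro hP g hg
    rcases Q.eq_empty_or_nonempty with rfl | hQ
    · simpa using hg a (by simp)
    · have h1 : ContinuousOn (fun t => Q.sup' hQ (fun q => g q t)) s :=
        ih hQ g (fun p hp => hg p (Finset.mem_cons.2 (Or.inr hp)))
      have h2 : ContinuousOn (g a) s := hg a (Finset.mem_cons_self a Q)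
      have heq : (fun t => (Finset.cons a Q ha).sup' hP (fun q => g q t))
          = fun t => (g a t) ⊔ (Q.sup' hQ (fun q => g q t)) := by
        funext t
        rw [Finset.sup'_cons hQ]
      rw [heq]
      exact h2.sup h1

/-- Barrier lemma: a finite family of `C¹` functions on `[0,∞)`, all starting `≤ c`,
stays `≤ c` provided at every touching time the active derivatives are `≤ e < 0`. -/
lemma sup'_le_barrier {ι : Type*} {P : Finset ι} (hP : P.Nonempty)
    {g : ι → ℝ → ℝ} {d : ι → ℝ → ℝ} {c e : ℝ} (he : e < 0)
    (hg : ∀ p ∈ P, ∀ t ∈ Ici (0:ℝ), HasDerivWithinAt (g p) (d p t) (Ici (0:ℝ)) t)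
    (h0 : ∀ p ∈ P, g p 0 ≤ c)
    (hbound : ∀ t ∈ Ici (0:ℝ), ∀ p ∈ P, g p t = c → (∀ q ∈ P, g q t ≤ c) → d p t ≤ e) :
    ∀ t ∈ Ici (0:ℝ), ∀ p ∈ P, g p t ≤ c := by
  intro t ht p hp
  set f : ℝ → ℝ := fun u => P.sup' hP (fun q => g q u) with hfdef
  suffices h : f t ≤ c from le_trans (Finset.le_sup' (fun q => g q t) hp) h
  set D : ℝ → Set ℝ := fun u => {y | ∃ p ∈ P, g p u = f u ∧ y = d p u} with hDdef
  have hfin : ∀ u, (D u).Finite := fun u =>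
    Set.Finite.subset (P.finite_toSet.image fun p => d p u)
      (by rintro y ⟨q, hq, _, rfl⟩; exact ⟨q, hq, rfl⟩)
  have hne : ∀ u, (D u).Nonempty := fun u => by
    obtain ⟨q, hq, hqe⟩ := P.exists_mem_eq_sup' hP (fun p => g p u)
    exact ⟨d q u, q, hq, hqe.symm, rfl⟩
  set f' : ℝ → ℝ := fun u => sSup (D u) with hf'def
  have key : ∀ u ∈ Icc (0:ℝ) t, f u ≤ c := by
    have hcont : ContinuousOn f (Icc 0 t) := by
      apply continuousOn_finset_sup' P hP
      intro q hq u hu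
      exact ((hg q hq u hu.1).continuousWithinAt).mono Icc_subset_Ici_self
    refine image_le_of_liminf_slope_right_lt_deriv_boundary (f' := f') hcont ?_ ?_
      (B' := fun _ => (0:ℝ)) (fun u => hasDerivAt_const u c) ?_
    · intro u hu r hr
      refine frequently_slope_sup'_lt hP (s := Ici (0:ℝ))
        (fun z hz => le_trans hu.1 (le_of_lt hz)) (fun q hq => hg q hq u hu.1) ?_
      intro q hq hact
      have hmem : d q u ∈ D u := ⟨q, hq, hact, rfl⟩
      exact lt_of_le_of_lt (le_csSup (hfin u).bddAbove hmem) hr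
    · exact Finset.sup'_le hP _ h0
    · intro u hu hfu
      have hle : f' u ≤ e := by
        apply csSup_le (hne u)
        rintro y ⟨q, hq, hact, rfl⟩
        exact hbound u hu.1 q hq (hact.trans hfu)
          (fun q' hq' => le_trans (Finset.le_sup' (fun p => g p u) hq') (le_of_eq hfu))
      exact lt_of_le_of_lt hle he
  exact key t ⟨ht, le_refl t⟩

end AuxBarrier

section CoreEstimate

/-- The key velocity estimate: if oscillator `i ∈ B` sits exactly `ℓ + 2πm` above the
minimum `k` of the cluster `A`, and `A` is contained in `[x k, x k + ℓ]`, then the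
relative velocity of `i` with respect to `k` is at most
`D(Ω_B) - κ (γ sin ℓ - 2(1-γ) sin (ℓ/2))`. -/
lemma kuramoto_core_est (N : ℕ) (hN : 1 ≤ N) (κ γ ℓ : ℝ)
    (hℓpos : 0 < ℓ) (hℓπ : ℓ < Real.pi)
    (ν : Fin N → ℝ) (A B : Finset (Fin N)) (hAB : A ⊆ B)
    (hcard : γ * N ≤ (A.card : ℝ)) (hκpos : 0 < κ)
    (x : Fin N → ℝ) (i k : Fin N) (hi : i ∈ B) (hk : k ∈ A)
    (m : ℤ) (hik : x i - x k = ℓ + 2 * Real.pi * m)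
    (hlow : ∀ j ∈ A, x k ≤ x j) (hup : ∀ j ∈ A, x j - x k ≤ ℓ) :
    (ν i + κ / N * ∑ j, Real.sin (x j - x i)) - (ν k + κ / N * ∑ j, Real.sin (x j - x k))
      ≤ diam B ν - κ * (γ * Real.sin ℓ - 2 * (1 - γ) * Real.sin (ℓ / 2)) := by
  have hs2 : 0 ≤ Real.sin (ℓ / 2) :=
    Real.sin_nonneg_of_nonneg_of_le_pi (by linarith) (by linarith [Real.pi_pos])
  have hsl : 0 ≤ Real.sin ℓ := Real.sin_nonneg_of_nonneg_of_le_pi hℓpos.le hℓπ.le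
  have hslmul : Real.sin ℓ = 2 * Real.sin (ℓ / 2) * Real.cos (ℓ / 2) := by
    rw [show ℓ = 2 * (ℓ / 2) by ring, Real.sin_two_mul]
    ring_nf
  have hid : ∀ j : Fin N, Real.sin (x j - x i) - Real.sin (x j - x k)
      = -2 * Real.sin (ℓ / 2) * Real.cos (x j - x k - ℓ / 2) := by
    intro j
    have h1 : x j - x i = (x j - x k - ℓ) + (-m : ℤ) * (2 * Real.pi) := by
      push_cast
      linear_combination (-1 : ℝ) * hik
    rw [h1, Real.sin_add_int_mul_two_pi]
    have trig : ∀ v w : ℝ, Real.sin (v - w) - Real.sin (v + w)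
        = -2 * Real.sin w * Real.cos v := by
      intro v w; rw [Real.sin_sub, Real.sin_add]; ring
    have h2 := trig (x j - x k - ℓ / 2) (ℓ / 2)
    rw [show x j - x k - ℓ / 2 - ℓ / 2 = x j - x k - ℓ by ring,
        show x j - x k - ℓ / 2 + ℓ / 2 = x j - x k by ring] at h2
    exact h2
  have hjA : ∀ j ∈ A, Real.sin (x j - x i) - Real.sin (x j - x k) ≤ -Real.sin ℓ := by
    intro j hj
    rw [hid j]
    have hu0 : 0 ≤ x j - x k := by linarith [hlow j hj]
    have hu1 : x j - x k ≤ ℓ := hup j hj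
    have habs : |x j - x k - ℓ / 2| ≤ ℓ / 2 := abs_le.2 ⟨by linarith, by linarith⟩
    have hcos : Real.cos (ℓ / 2) ≤ Real.cos (x j - x k - ℓ / 2) := by
      have := Real.cos_le_cos_of_nonneg_of_le_pi (abs_nonneg (x j - x k - ℓ / 2))
        (by linarith [Real.pi_pos] : ℓ / 2 ≤ Real.pi) habs
      rwa [Real.cos_abs] at this
    nlinarith
  have hjNA : ∀ j : Fin N, Real.sin (x j - x i) - Real.sin (x j - x k)
      ≤ 2 * Real.sin (ℓ / 2) := by
    intro j
    rw [hid j]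
    nlinarith [Real.neg_one_le_cos (x j - x k - ℓ / 2)]
  have hcardle : (A.card : ℝ) ≤ N := by
    exact_mod_cast le_trans (Finset.card_le_card (Finset.subset_univ A)) (le_of_eq (by simp))
  have hsum : ∑ j, (Real.sin (x j - x i) - Real.sin (x j - x k))
      ≤ (A.card : ℝ) * (-Real.sin ℓ) + ((N : ℝ) - A.card) * (2 * Real.sin (ℓ / 2)) := by
    have hsplit : ∑ j, (Real.sin (x j - x i) - Real.sin (x j - x k))
        = ∑ j ∈ Finset.univ \ A, (Real.sin (x j - x i) - Real.sin (x j - x k))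
          + ∑ j ∈ A, (Real.sin (x j - x i) - Real.sin (x j - x k)) := by
      rw [Finset.sum_sdiff (Finset.subset_univ A)]
    rw [hsplit]
    have hA : ∑ j ∈ A, (Real.sin (x j - x i) - Real.sin (x j - x k))
        ≤ (A.card : ℝ) * (-Real.sin ℓ) := by
      calc ∑ j ∈ A, (Real.sin (x j - x i) - Real.sin (x j - x k))
          ≤ ∑ _j ∈ A, (-Real.sin ℓ) := Finset.sum_le_sum (fun j hj => hjA j hj)
        _ = (A.card : ℝ) * (-Real.sin ℓ) := by rw [Finset.sum_const, nsmul_eq_mul]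
    have hNA : ∑ j ∈ Finset.univ \ A, (Real.sin (x j - x i) - Real.sin (x j - x k))
        ≤ ((N : ℝ) - A.card) * (2 * Real.sin (ℓ / 2)) := by
      calc ∑ j ∈ Finset.univ \ A, (Real.sin (x j - x i) - Real.sin (x j - x k))
          ≤ ∑ _j ∈ Finset.univ \ A, (2 * Real.sin (ℓ / 2)) :=
            Finset.sum_le_sum (fun j _ => hjNA j)
        _ = ((Finset.univ \ A).card : ℝ) * (2 * Real.sin (ℓ / 2)) := by
            rw [Finset.sum_const, nsmul_eq_mul]
        _ = ((N : ℝ) - A.card) * (2 * Real.sin (ℓ / 2)) := by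
            congr 1
            rw [Finset.card_sdiff_of_subset (Finset.subset_univ A)]
            rw [Nat.cast_sub
              (le_trans (Finset.card_le_card (Finset.subset_univ A)) (le_of_eq (by simp)))]
            simp
    linarith
  have hν : ν i - ν k ≤ diam B ν :=
    le_trans (le_abs_self _) (abs_sub_le_diam ν hi (hAB hk))
  have hN0 : (0 : ℝ) < N := by exact_mod_cast Nat.lt_of_lt_of_le Nat.zero_lt_one hN
  have hmul : κ / N * ∑ j, (Real.sin (x j - x i) - Real.sin (x j - x k))
      ≤ κ / N * ((A.card : ℝ) * (-Real.sin ℓ) + ((N : ℝ) - A.card) * (2 * Real.sin (ℓ / 2))) :=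
    mul_le_mul_of_nonneg_left hsum (div_nonneg hκpos.le hN0.le)
  have harith :
      κ / N * ((A.card : ℝ) * (-Real.sin ℓ) + ((N : ℝ) - A.card) * (2 * Real.sin (ℓ / 2)))
      ≤ -(κ * (γ * Real.sin ℓ - 2 * (1 - γ) * Real.sin (ℓ / 2))) := by
    rw [div_mul_eq_mul_div, div_le_iff₀ hN0]
    have hprod : 0 ≤ κ * (((A.card : ℝ) - γ * N) * (Real.sin ℓ + 2 * Real.sin (ℓ / 2))) :=
      mul_nonneg hκpos.le (mul_nonneg (by linarith) (by linarith))
    nlinarith [hprod]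
  have hfinal : (ν i + κ / N * ∑ j, Real.sin (x j - x i))
      - (ν k + κ / N * ∑ j, Real.sin (x j - x k))
      = (ν i - ν k) + κ / N * ∑ j, (Real.sin (x j - x i) - Real.sin (x j - x k)) := by
    rw [Finset.sum_sub_distrib]
    ring
  rw [hfinal]
  linarith

end CoreEstimate

section OneSided

/-- One-sided trapping: every oscillator of `B` stays at uniformly bounded (signed)
distance above every oscillator of `A`. -/
lemma one_sided_bound (N : ℕ) (hN : 1 ≤ N) (κ γ ℓ : ℝ)
    (hγ₁ : 1 / 2 < γ) (hγ₂ : γ ≤ 1)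
    (hℓ : ℓ ∈ Set.Ioo 0 (2 * Real.arccos ((1 - γ) / γ)))
    (ν : Fin N → ℝ) (A B : Finset (Fin N)) (hAB : A ⊆ B)
    (hcard : γ * N ≤ (A.card : ℝ))
    (hκ : diam B ν / (γ * Real.sin ℓ - 2 * (1 - γ) * Real.sin (ℓ / 2)) < κ)
    (θ : ℝ → Fin N → ℝ) (hθ : IsKuramotoOn κ ν θ)
    (h0 : diam A (θ 0) ≤ ℓ) :
    ∃ M : ℝ, ∀ t ∈ Ici (0:ℝ), ∀ i ∈ B, ∀ k ∈ A, θ t i - θ t k ≤ M := by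
  have hγ0 : (0:ℝ) < γ := by linarith
  have hN0 : (0 : ℝ) < N := by exact_mod_cast Nat.lt_of_lt_of_le Nat.zero_lt_one hN
  have hA : A.Nonempty := by
    rw [← Finset.card_pos]
    rcases Nat.eq_zero_or_pos A.card with h | h
    · exfalso
      rw [h] at hcard
      push_cast at hcard
      nlinarith
    · exact h
  have hB : B.Nonempty := hA.mono hAB
  set z : ℝ := (1 - γ) / γ with hzdef
  have hz0 : 0 ≤ z := div_nonneg (by linarith) hγ0.le
  have hz1 : z ≤ 1 := (div_le_one hγ0).2 (by linarith)
  have hαπ2 : Real.arccos z ≤ Real.pi / 2 := Real.arccos_le_pi_div_two.2 hz0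
  have hℓpos : 0 < ℓ := hℓ.1
  have hℓπ : ℓ < Real.pi := by
    have := hℓ.2
    linarith
  have hs2pos : 0 < Real.sin (ℓ / 2) :=
    Real.sin_pos_of_pos_of_lt_pi (by linarith) (by linarith [Real.pi_pos])
  have hcos : z < Real.cos (ℓ / 2) := by
    have h1 : ℓ / 2 < Real.arccos z := by linarith [hℓ.2]
    have h2 := Real.cos_lt_cos_of_nonneg_of_le_pi (by linarith : (0:ℝ) ≤ ℓ / 2)
      (Real.arccos_le_pi z) h1
    rwa [Real.cos_arccos (by linarith : (-1:ℝ) ≤ z) hz1] at h2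
  set F : ℝ := γ * Real.sin ℓ - 2 * (1 - γ) * Real.sin (ℓ / 2) with hFdef
  have hslmul : Real.sin ℓ = 2 * Real.sin (ℓ / 2) * Real.cos (ℓ / 2) := by
    rw [show ℓ = 2 * (ℓ / 2) by ring, Real.sin_two_mul]
    ring_nf
  have hγcos : 1 - γ < γ * Real.cos (ℓ / 2) := by
    have := (div_lt_iff₀ hγ0).1 hcos
    linarith
  have hFpos : 0 < F := by
    rw [hFdef, hslmul]
    nlinarith
  have hκpos : 0 < κ := lt_of_le_of_lt (div_nonneg (diam_nonneg B ν) hFpos.le) hκ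
  have hdiam : diam B ν < κ * F := (div_lt_iff₀ hFpos).1 hκ
  set e : ℝ := diam B ν - κ * F with hedef
  have he : e < 0 := by rw [hedef]; linarith
  -- Step 1: the ensemble A stays ℓ-cohesive for all nonnegative times
  have step1 : ∀ t ∈ Ici (0:ℝ), ∀ p ∈ A ×ˢ A, θ t p.1 - θ t p.2 ≤ ℓ := by
    apply sup'_le_barrier (hP := hA.product hA)
      (g := fun p t => θ t p.1 - θ t p.2)
      (d := fun p t => (ν p.1 + κ / N * ∑ j, Real.sin (θ t j - θ t p.1))
        - (ν p.2 + κ / N * ∑ j, Real.sin (θ t j - θ t p.2))) he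
    · intro p hp t ht
      exact (hθ p.1 t ht).sub (hθ p.2 t ht)
    · intro p hp
      rcases Finset.mem_product.1 hp with ⟨h1, h2⟩
      exact le_trans (le_abs_self _) (le_trans (abs_sub_le_diam (θ 0) h1 h2) h0)
    · intro t ht p hp hpc hall
      rcases Finset.mem_product.1 hp with ⟨hi, hk⟩
      refine kuramoto_core_est N hN κ γ ℓ hℓpos hℓπ ν A B hAB hcard hκpos
        (θ t) p.1 p.2 (hAB hi) hk 0 (by rw [hpc]; push_cast; ring) ?_ ?_
      · intro j hj
        have h1 : θ t p.1 - θ t j ≤ ℓ := hall (p.1, j) (Finset.mem_product.2 ⟨hi, hj⟩)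
        linarith [hpc]
      · intro j hj
        exact hall (j, p.2) (Finset.mem_product.2 ⟨hj, hk⟩)
  -- Step 2: every oscillator of B can never cross a level `ℓ + 2πm` above the minimum of A
  have step2 : ∀ i ∈ B, ∃ Mi : ℝ, ∀ t ∈ Ici (0:ℝ), ∀ k ∈ A, θ t i - θ t k ≤ Mi := by
    intro i hi
    set f0 : ℝ := A.sup' hA (fun k => θ 0 i - θ 0 k) with hf0def
    set m : ℤ := ⌈(f0 - ℓ) / (2 * Real.pi)⌉ with hmdef
    refine ⟨ℓ + 2 * Real.pi * m, ?_⟩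
    have h2π : (0:ℝ) < 2 * Real.pi := by positivity
    have hc0 : ∀ k ∈ A, θ 0 i - θ 0 k ≤ ℓ + 2 * Real.pi * m := by
      intro k hk
      have h1 : θ 0 i - θ 0 k ≤ f0 := Finset.le_sup' (fun k => θ 0 i - θ 0 k) hk
      have h2 : (f0 - ℓ) / (2 * Real.pi) ≤ m := Int.le_ceil _
      rw [div_le_iff₀ h2π] at h2
      linarith
    apply sup'_le_barrier hA
      (g := fun k t => θ t i - θ t k)
      (d := fun k t => (ν i + κ / N * ∑ j, Real.sin (θ t j - θ t i))
        - (ν k + κ / N * ∑ j, Real.sin (θ t j - θ t k))) he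
    · intro k hk t ht
      exact (hθ i t ht).sub (hθ k t ht)
    · exact hc0
    · intro t ht k hk hkc hall
      refine kuramoto_core_est N hN κ γ ℓ hℓpos hℓπ ν A B hAB hcard hκpos
        (θ t) i k hi hk m hkc ?_ ?_
      · intro j hj
        have h1 : θ t i - θ t j ≤ ℓ + 2 * Real.pi * m := hall j hj
        linarith [hkc]
      · intro j hj
        exact step1 t ht (j, k) (Finset.mem_product.2 ⟨hj, hk⟩)
  choose! Mfun hM using step2
  refine ⟨B.sup' hB Mfun, ?_⟩
  intro t ht i hi k hk
  exact le_trans (hM i hi t ht k hk) (Finset.le_sup' Mfun hi)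

end OneSided

/-- Partial phase-locking of the ensemble `B` (Theorem 3.1 (2)): under the
conditions guaranteeing stability of the majority ensemble `A`, the phase
diameter of the larger ensemble `B` stays uniformly bounded on `[0,∞)`. -/
theorem majority_ensemble_partial_phase_locking (N : ℕ) (hN : 1 ≤ N) (κ γ ℓ : ℝ)
    (hγ₁ : 1 / 2 < γ) (hγ₂ : γ ≤ 1)
    (hℓ : ℓ ∈ Set.Ioo 0 (2 * Real.arccos ((1 - γ) / γ)))
    (ν : Fin N → ℝ) (A B : Finset (Fin N)) (hAB : A ⊆ B)
    (hcard : γ * N ≤ (A.card : ℝ))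
    (hκ : diam B ν / (γ * Real.sin ℓ - 2 * (1 - γ) * Real.sin (ℓ / 2)) < κ)
    (θ : ℝ → Fin N → ℝ) (hθ : IsKuramotoOn κ ν θ)
    (h0 : diam A (θ 0) ≤ ℓ) :
    ∃ M : ℝ, ∀ t ≥ (0 : ℝ), diam B (θ t) ≤ M := by
  have hγ0 : (0:ℝ) < γ := by linarith
  have hN0 : (0 : ℝ) < N := by exact_mod_cast Nat.lt_of_lt_of_le Nat.zero_lt_one hN
  have hA : A.Nonempty := by
    rw [← Finset.card_pos]
    rcases Nat.eq_zero_or_pos A.card with h | h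
    · exfalso
      rw [h] at hcard
      push_cast at hcard
      nlinarith
    · exact h
  obtain ⟨a, haA⟩ := hA
  obtain ⟨M₁, hM₁⟩ := one_sided_bound N hN κ γ ℓ hγ₁ hγ₂ hℓ ν A B hAB hcard hκ θ hθ h0
  have hθneg : IsKuramotoOn κ (fun j => -ν j) (fun t j => -θ t j) := by
    intro p t ht
    have h1 := (hθ p t ht).neg
    have h2 : -(ν p + κ / N * ∑ j, Real.sin (θ t j - θ t p))
        = (fun j => -ν j) p + κ / N * ∑ j, Real.sin (-θ t j - -θ t p) := by
      simp only
      rw [show (fun j => Real.sin (-θ t j - -θ t p)) = fun j => -Real.sin (θ t j - θ t p) by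
        funext j; rw [show -θ t j - -θ t p = -(θ t j - θ t p) by ring, Real.sin_neg]]
      rw [Finset.sum_neg_distrib]
      ring
    rw [h2] at h1
    exact h1
  have hκ' : diam B (fun j => -ν j) / (γ * Real.sin ℓ - 2 * (1 - γ) * Real.sin (ℓ / 2)) < κ := by
    rwa [diam_neg]
  have h0' : diam A ((fun t j => -θ t j) 0) ≤ ℓ := by
    simpa [diam_neg] using h0
  obtain ⟨M₂, hM₂⟩ := one_sided_bound N hN κ γ ℓ hγ₁ hγ₂ hℓ (fun j => -ν j) A B hAB hcard hκ'
    (fun t j => -θ t j) hθneg h0'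
  refine ⟨max 0 (M₁ + M₂), ?_⟩
  intro t ht
  apply diam_le (le_max_left _ _)
  intro i hi j hj
  have hup : θ t i - θ t j ≤ M₁ + M₂ := by
    have h1 : θ t i - θ t a ≤ M₁ := hM₁ t ht i hi a haA
    have h2 : -θ t j - -θ t a ≤ M₂ := hM₂ t ht j hj a haA
    linarith
  have hdn : θ t j - θ t i ≤ M₁ + M₂ := by
    have h1 : θ t j - θ t a ≤ M₁ := hM₁ t ht j hj a haA
    have h2 : -θ t i - -θ t a ≤ M₂ := hM₂ t ht i hi a haA
    linarith
  rw [abs_le]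
  constructor
  · have := le_max_right (0:ℝ) (M₁ + M₂); linarith
  · have := le_max_right (0:ℝ) (M₁ + M₂); linarith
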